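/- arXiv:1201.0891 — 3 statements merged into one kernel-verified Lean document; each statement's English description precedes it below -/
import Mathlib

section
/- For every positive semidefinite d×d matrix ρ with tr(ρ) = 1: t(ρ) = 1 if and only if h(ρ) = 1. -/
noncomputable section
open Matrix
open scoped ComplexOrder

variable {d m r : ℕ}

/-- One step of process `i`: `T_i(ρ) = E_i(M₁ ρ M₁†) = ∑_j (E_{i,j} M₁) ρ (E_{i,j} M₁)†`. -/
def Tstep (E : Fin m → Fin r → Matrix (Fin d) (Fin d) ℂ)
    (M1 : Matrix (Fin d) (Fin d) ℂ) (i : Fin m)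
    (ρ : Matrix (Fin d) (Fin d) ℂ) : Matrix (Fin d) (Fin d) ℂ :=
  ∑ j, (E i j * M1) * ρ * (E i j * M1)ᴴ

/-- `T_f` for a word `f = s₁⋯s_n`: apply `T_{s₁}` first, then `T_{s₂}`, …, `T_{s_n}`. -/
def Tword (E : Fin m → Fin r → Matrix (Fin d) (Fin d) ℂ)
    (M1 : Matrix (Fin d) (Fin d) ℂ) (f : List (Fin m))
    (ρ : Matrix (Fin d) (Fin d) ℂ) : Matrix (Fin d) (Fin d) ℂ :=
  f.foldl (fun σ k => Tstep E M1 k σ) ρ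

/-- The support of a matrix: its column space, as a subspace of `ℂ^d`. -/
def supp (A : Matrix (Fin d) (Fin d) ℂ) : Submodule ℂ (Fin d → ℂ) :=
  LinearMap.range (Matrix.toLin' A)

/-- Length-`n` prefix of a schedule. -/
def prefixn (s : ℕ → Fin m) (n : ℕ) : List (Fin m) :=
  List.ofFn (fun i : Fin n => s i)

/-- Termination probability within a word `f`. -/
def tWord (E : Fin m → Fin r → Matrix (Fin d) (Fin d) ℂ)
    (M0 M1 : Matrix (Fin d) (Fin d) ℂ) (f : List (Fin m))
    (ρ : Matrix (Fin d) (Fin d) ℂ) : ℝ :=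
  ∑ n ∈ Finset.range (f.length + 1),
    (M0 * Tword E M1 (f.take n) ρ * M0ᴴ).trace.re

/-- Termination probability along a schedule `s`. -/
def tSched (E : Fin m → Fin r → Matrix (Fin d) (Fin d) ℂ)
    (M0 M1 : Matrix (Fin d) (Fin d) ℂ) (s : ℕ → Fin m)
    (ρ : Matrix (Fin d) (Fin d) ℂ) : ℝ :=
  ∑' n : ℕ, (M0 * Tword E M1 (prefixn s n) ρ * M0ᴴ).trace.re

/-- Termination probability `t(ρ)`: infimum over all schedules. -/
def tInf (E : Fin m → Fin r → Matrix (Fin d) (Fin d) ℂ)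
    (M0 M1 : Matrix (Fin d) (Fin d) ℂ)
    (ρ : Matrix (Fin d) (Fin d) ℂ) : ℝ :=
  ⨅ s : ℕ → Fin m, tSched E M0 M1 s ρ

/-- The reachable space `H_{R(ρ)}`. -/
def HR (E : Fin m → Fin r → Matrix (Fin d) (Fin d) ℂ)
    (M1 : Matrix (Fin d) (Fin d) ℂ)
    (ρ : Matrix (Fin d) (Fin d) ℂ) : Submodule ℂ (Fin d → ℂ) :=
  ⨆ f : List (Fin m), supp (Tword E M1 f ρ)

/-- The average super-operator `T = (1/m) ∑ T_i`. -/
def Tavg (E : Fin m → Fin r → Matrix (Fin d) (Fin d) ℂ)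
    (M1 : Matrix (Fin d) (Fin d) ℂ)
    (ρ : Matrix (Fin d) (Fin d) ℂ) : Matrix (Fin d) (Fin d) ℂ :=
  ((m : ℂ)⁻¹) • ∑ i : Fin m, Tstep E M1 i ρ

/-- `H_{R̄_n(ρ)} = ⋁_{k=0}^n supp(T^k(ρ))`. -/
def HRbar (E : Fin m → Fin r → Matrix (Fin d) (Fin d) ℂ)
    (M1 : Matrix (Fin d) (Fin d) ℂ)
    (ρ : Matrix (Fin d) (Fin d) ℂ) (n : ℕ) : Submodule ℂ (Fin d → ℂ) :=
  ⨆ k : Fin (n + 1), supp ((Tavg E M1)^[k] ρ)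

/-- Reachable termination probability `h(ρ)`. -/
def hProb (E : Fin m → Fin r → Matrix (Fin d) (Fin d) ℂ)
    (M0 M1 : Matrix (Fin d) (Fin d) ℂ)
    (ρ : Matrix (Fin d) (Fin d) ℂ) : ℝ :=
  sInf { x : ℝ | ∃ σ : Matrix (Fin d) (Fin d) ℂ,
    σ.PosSemidef ∧ σ.trace = 1 ∧ supp σ ≤ HR E M1 ρ ∧ x = tInf E M0 M1 σ }

/-- `PD_f`: pure states diverging within the word `f`. -/
def PDword (E : Fin m → Fin r → Matrix (Fin d) (Fin d) ℂ)
    (M0 M1 : Matrix (Fin d) (Fin d) ℂ) (f : List (Fin m)) : Set (Fin d → ℂ) :=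
  { x : Fin d → ℂ | tWord E M0 M1 f (Matrix.vecMulVec x (star x)) = 0 }

/-- `PD_n`: union of `PD_f` over words of length `n`. -/
def PDn (E : Fin m → Fin r → Matrix (Fin d) (Fin d) ℂ)
    (M0 M1 : Matrix (Fin d) (Fin d) ℂ) (n : ℕ) : Set (Fin d → ℂ) :=
  { x : Fin d → ℂ | ∃ f : List (Fin m), f.length = n ∧ x ∈ PDword E M0 M1 f }

/-- `PD`: the diverging pure states. -/
def PD (E : Fin m → Fin r → Matrix (Fin d) (Fin d) ℂ)
    (M0 M1 : Matrix (Fin d) (Fin d) ℂ) : Set (Fin d → ℂ) :=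
  { x : Fin d → ℂ | ∃ s : ℕ → Fin m, tSched E M0 M1 s (Matrix.vecMulVec x (star x)) = 0 }

section Aux
variable (E : Fin m → Fin r → Matrix (Fin d) (Fin d) ℂ) (M0 M1 : Matrix (Fin d) (Fin d) ℂ)

lemma aux_psd_sum {ι : Type*} (s : Finset ι) (f : ι → Matrix (Fin d) (Fin d) ℂ)
    (hf : ∀ i ∈ s, (f i).PosSemidef) : (∑ i ∈ s, f i).PosSemidef := by
  classical
  induction s using Finset.induction_on with
  | empty => simpa using (Matrix.PosSemidef.zero (n := Fin d) (R := ℂ))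
  | insert a s hnotmem ih =>
    rw [Finset.sum_insert hnotmem]
    exact (hf a (Finset.mem_insert_self a s)).add
      (ih fun i hi => hf i (Finset.mem_insert_of_mem hi))

lemma aux_Tstep_psd (i : Fin m) {ρ : Matrix (Fin d) (Fin d) ℂ} (hρ : ρ.PosSemidef) :
    (Tstep E M1 i ρ).PosSemidef :=
  aux_psd_sum _ _ fun j _ => hρ.mul_mul_conjTranspose_same _

lemma aux_Tstep_sub (i : Fin m) (σ τ : Matrix (Fin d) (Fin d) ℂ) :
    Tstep E M1 i (τ - σ) = Tstep E M1 i τ - Tstep E M1 i σ := by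
  simp [Tstep, Matrix.mul_sub, Matrix.sub_mul, Finset.sum_sub_distrib]

lemma aux_Tstep_smul (i : Fin m) (c : ℂ) (ρ : Matrix (Fin d) (Fin d) ℂ) :
    Tstep E M1 i (c • ρ) = c • Tstep E M1 i ρ := by
  simp [Tstep, Matrix.mul_smul, Matrix.smul_mul, Finset.smul_sum]

lemma aux_Tword_cons (k : Fin m) (f : List (Fin m)) (ρ : Matrix (Fin d) (Fin d) ℂ) :
    Tword E M1 (k :: f) ρ = Tword E M1 f (Tstep E M1 k ρ) := rfl

lemma aux_Tword_append (f g : List (Fin m)) (ρ : Matrix (Fin d) (Fin d) ℂ) :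
    Tword E M1 (f ++ g) ρ = Tword E M1 g (Tword E M1 f ρ) := by
  simp [Tword, List.foldl_append]

lemma aux_Tword_psd (f : List (Fin m)) {ρ : Matrix (Fin d) (Fin d) ℂ} (hρ : ρ.PosSemidef) :
    (Tword E M1 f ρ).PosSemidef := by
  induction f generalizing ρ with
  | nil => exact hρ
  | cons k f ih => exact ih (aux_Tstep_psd E M1 k hρ)

lemma aux_Tword_sub (f : List (Fin m)) (σ τ : Matrix (Fin d) (Fin d) ℂ) :
    Tword E M1 f (τ - σ) = Tword E M1 f τ - Tword E M1 f σ := by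
  induction f generalizing σ τ with
  | nil => rfl
  | cons k f ih => rw [aux_Tword_cons, aux_Tstep_sub, ih]; rfl

lemma aux_Tword_smul (f : List (Fin m)) (c : ℂ) (ρ : Matrix (Fin d) (Fin d) ℂ) :
    Tword E M1 f (c • ρ) = c • Tword E M1 f ρ := by
  induction f generalizing ρ with
  | nil => rfl
  | cons k f ih => rw [aux_Tword_cons, aux_Tstep_smul, ih]; rfl

end Aux
section Aux2
variable (E : Fin m → Fin r → Matrix (Fin d) (Fin d) ℂ) (M0 M1 : Matrix (Fin d) (Fin d) ℂ)

lemma aux_trace_Tstep (hE : ∀ i, ∑ j, (E i j)ᴴ * E i j = 1) (i : Fin m)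
    (τ : Matrix (Fin d) (Fin d) ℂ) :
    (Tstep E M1 i τ).trace = (M1 * τ * M1ᴴ).trace := by
  unfold Tstep
  rw [Matrix.trace_sum]
  have h1 : ∀ j : Fin r, ((E i j * M1) * τ * (E i j * M1)ᴴ).trace
      = ((E i j)ᴴ * E i j * (M1 * τ * M1ᴴ)).trace := by
    intro j
    rw [Matrix.conjTranspose_mul]
    rw [show (E i j * M1) * τ * (M1ᴴ * (E i j)ᴴ) = E i j * (M1 * τ * M1ᴴ) * (E i j)ᴴ by
      simp [Matrix.mul_assoc]]
    rw [Matrix.trace_mul_cycle]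
  simp_rw [h1]
  rw [← Matrix.trace_sum, ← Finset.sum_mul, hE i, Matrix.one_mul]

lemma aux_trace_split (hM : M0ᴴ * M0 + M1ᴴ * M1 = 1) (τ : Matrix (Fin d) (Fin d) ℂ) :
    (M0 * τ * M0ᴴ).trace + (M1 * τ * M1ᴴ).trace = τ.trace := by
  rw [Matrix.trace_mul_cycle (A := M0), Matrix.trace_mul_cycle (A := M1),
    ← Matrix.trace_add, ← Matrix.add_mul, hM, Matrix.one_mul]

lemma aux_psd_trace_nonneg {τ : Matrix (Fin d) (Fin d) ℂ} (hτ : τ.PosSemidef) :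
    0 ≤ τ.trace := by
  have h : ∀ i, 0 ≤ τ i i := by
    intro i
    have := hτ.dotProduct_mulVec_nonneg (Pi.single i 1)
    simpa [dotProduct, Matrix.mulVec, Pi.single_apply] using this
  exact Finset.sum_nonneg fun i _ => h i

lemma aux_psd_trace_re {τ : Matrix (Fin d) (Fin d) ℂ} (hτ : τ.PosSemidef) :
    τ.trace = (τ.trace.re : ℂ) := by
  have := aux_psd_trace_nonneg hτ
  rw [Complex.le_def] at this
  exact (Complex.ext rfl (by simpa using this.2.symm))

lemma aux_trace_re_nonneg {τ : Matrix (Fin d) (Fin d) ℂ} (hτ : τ.PosSemidef) :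
    0 ≤ τ.trace.re := by
  have := aux_psd_trace_nonneg hτ
  rw [Complex.le_def] at this
  simpa using this.1

lemma aux_trace_re_mono {σ τ : Matrix (Fin d) (Fin d) ℂ} (h : (τ - σ).PosSemidef) :
    σ.trace.re ≤ τ.trace.re := by
  have := aux_trace_re_nonneg h
  rw [Matrix.trace_sub] at this
  simp only [Complex.sub_re] at this
  linarith

end Aux2
section Aux3
open Filter Topology
variable (E : Fin m → Fin r → Matrix (Fin d) (Fin d) ℂ) (M0 M1 : Matrix (Fin d) (Fin d) ℂ)

lemma aux_prefixn_succ (s : ℕ → Fin m) (n : ℕ) :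
    prefixn s (n + 1) = prefixn s n ++ [s n] := by
  rw [prefixn, List.ofFn_succ', List.concat_eq_append, prefixn]
  simp

lemma aux_term_nonneg {σ : Matrix (Fin d) (Fin d) ℂ} (hσ : σ.PosSemidef) (f : List (Fin m)) :
    0 ≤ (M0 * Tword E M1 f σ * M0ᴴ).trace.re :=
  aux_trace_re_nonneg (((aux_Tword_psd E M1 f hσ)).mul_mul_conjTranspose_same M0)

lemma aux_partial_sum (hE : ∀ i, ∑ j, (E i j)ᴴ * E i j = 1) (hM : M0ᴴ * M0 + M1ᴴ * M1 = 1)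
    (s : ℕ → Fin m) (ρ : Matrix (Fin d) (Fin d) ℂ) (N : ℕ) :
    ∑ n ∈ Finset.range N, (M0 * Tword E M1 (prefixn s n) ρ * M0ᴴ).trace.re
      = ρ.trace.re - (Tword E M1 (prefixn s N) ρ).trace.re := by
  induction N with
  | zero => simp [prefixn, Tword]
  | succ N ih =>
    rw [Finset.sum_range_succ, ih, aux_prefixn_succ, aux_Tword_append]
    set τ := Tword E M1 (prefixn s N) ρ with hτ
    have key : (M0 * τ * M0ᴴ).trace + (Tword E M1 [s N] τ).trace = τ.trace := by
      have h2 : (Tword E M1 [s N] τ) = Tstep E M1 (s N) τ := rfl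
      rw [h2, aux_trace_Tstep E M1 hE, aux_trace_split M0 M1 hM]
    have key' := congrArg Complex.re key
    simp only [Complex.add_re] at key'
    linarith

lemma aux_summable (hE : ∀ i, ∑ j, (E i j)ᴴ * E i j = 1) (hM : M0ᴴ * M0 + M1ᴴ * M1 = 1)
    (s : ℕ → Fin m) {ρ : Matrix (Fin d) (Fin d) ℂ} (hρ : ρ.PosSemidef) :
    Summable (fun n => (M0 * Tword E M1 (prefixn s n) ρ * M0ᴴ).trace.re) := by
  apply summable_of_sum_range_le (c := ρ.trace.re)
  · intro n; exact aux_term_nonneg E M0 M1 hρ _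
  · intro N
    rw [aux_partial_sum E M0 M1 hE hM]
    have := aux_trace_re_nonneg (aux_Tword_psd E M1 (prefixn s N) hρ)
    linarith

lemma aux_tendsto_g (hE : ∀ i, ∑ j, (E i j)ᴴ * E i j = 1) (hM : M0ᴴ * M0 + M1ᴴ * M1 = 1)
    (s : ℕ → Fin m) {ρ : Matrix (Fin d) (Fin d) ℂ} (hρ : ρ.PosSemidef) :
    Tendsto (fun N => (Tword E M1 (prefixn s N) ρ).trace.re) atTop
      (𝓝 (ρ.trace.re - tSched E M0 M1 s ρ)) := by
  have hsum := aux_summable E M0 M1 hE hM s hρ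
  have ht := hsum.hasSum.tendsto_sum_nat
  have : Tendsto (fun N => ρ.trace.re -
      ∑ n ∈ Finset.range N, (M0 * Tword E M1 (prefixn s n) ρ * M0ᴴ).trace.re) atTop
      (𝓝 (ρ.trace.re - tSched E M0 M1 s ρ)) := tendsto_const_nhds.sub ht
  refine this.congr fun N => ?_
  rw [aux_partial_sum E M0 M1 hE hM]
  ring

lemma aux_tSched_nonneg (s : ℕ → Fin m) {ρ : Matrix (Fin d) (Fin d) ℂ} (hρ : ρ.PosSemidef) :
    0 ≤ tSched E M0 M1 s ρ :=
  tsum_nonneg fun n => aux_term_nonneg E M0 M1 hρ _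

lemma aux_tSched_le (hE : ∀ i, ∑ j, (E i j)ᴴ * E i j = 1) (hM : M0ᴴ * M0 + M1ᴴ * M1 = 1)
    (s : ℕ → Fin m) {ρ : Matrix (Fin d) (Fin d) ℂ} (hρ : ρ.PosSemidef) :
    tSched E M0 M1 s ρ ≤ ρ.trace.re := by
  have h := aux_tendsto_g E M0 M1 hE hM s hρ
  have h0 : (0:ℝ) ≤ ρ.trace.re - tSched E M0 M1 s ρ :=
    ge_of_tendsto' h fun c => aux_trace_re_nonneg (aux_Tword_psd E M1 (prefixn s c) hρ)
  linarith

lemma aux_tInf_le (s : ℕ → Fin m) (ρ : Matrix (Fin d) (Fin d) ℂ)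
    (hρ : ρ.PosSemidef) : tInf E M0 M1 ρ ≤ tSched E M0 M1 s ρ :=
  ciInf_le ⟨0, fun x ⟨s', hs'⟩ => hs' ▸ aux_tSched_nonneg E M0 M1 s' hρ⟩ s

lemma aux_tInf_nonneg (hm : 0 < m) (ρ : Matrix (Fin d) (Fin d) ℂ) (hρ : ρ.PosSemidef) :
    0 ≤ tInf E M0 M1 ρ := by
  have : Nonempty (ℕ → Fin m) := ⟨fun _ => ⟨0, hm⟩⟩
  exact le_ciInf fun s => aux_tSched_nonneg E M0 M1 s hρ

end Aux3
section Aux4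
open Matrix

lemma aux_herm_move {H : Matrix (Fin d) (Fin d) ℂ} (hH : H.IsHermitian) (x y : Fin d → ℂ) :
    star x ⬝ᵥ (H *ᵥ y) = star (H *ᵥ x) ⬝ᵥ y := by
  rw [dotProduct_mulVec, Matrix.star_mulVec, hH.eq]

lemma aux_psd_add_kernel {A B : Matrix (Fin d) (Fin d) ℂ}
    (hA : A.PosSemidef) (hB : B.PosSemidef) (x : Fin d → ℂ)
    (h : (A + B) *ᵥ x = 0) : A *ᵥ x = 0 := by
  apply (hA.dotProduct_mulVec_zero_iff x).mp
  have h0 : star x ⬝ᵥ (A *ᵥ x) + star x ⬝ᵥ (B *ᵥ x) = 0 := by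
    rw [← dotProduct_add, ← Matrix.add_mulVec, h, dotProduct_zero]
  have ha := hA.dotProduct_mulVec_nonneg x
  have hb := hB.dotProduct_mulVec_nonneg x
  have : star x ⬝ᵥ (A *ᵥ x) ≤ 0 := by
    have : star x ⬝ᵥ (A *ᵥ x) = -(star x ⬝ᵥ (B *ᵥ x)) := by linear_combination h0
    rw [this]; exact neg_nonpos.mpr hb
  exact le_antisymm this ha

lemma aux_supp_le_supp_add {A B : Matrix (Fin d) (Fin d) ℂ}
    (hA : A.PosSemidef) (hB : B.PosSemidef) : supp A ≤ supp (A + B) := by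
  classical
  set C := A + B with hCdef
  have hC : C.PosSemidef := hA.add hB
  set K := LinearMap.ker (Matrix.toLin' C) with hKdef
  set R := supp C with hRdef
  have hdisj : K ⊓ R = ⊥ := by
    rw [Submodule.eq_bot_iff]
    rintro x ⟨hxK, hxR⟩
    obtain ⟨y, hy⟩ := hxR
    have hx0 : C *ᵥ x = 0 := by
      simpa [Matrix.toLin'_apply] using (LinearMap.mem_ker.mp hxK)
    have hxy : x = C *ᵥ y := by
      rw [← hy, Matrix.toLin'_apply]
    have h0 : star x ⬝ᵥ x = 0 := by
      calc star x ⬝ᵥ x = star x ⬝ᵥ (C *ᵥ y) := by rw [← hxy]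
        _ = star (C *ᵥ x) ⬝ᵥ y := aux_herm_move hC.isHermitian x y
        _ = 0 := by rw [hx0]; simp
    exact dotProduct_star_self_eq_zero.mp h0
  have htop : K ⊔ R = ⊤ := by
    apply Submodule.eq_top_of_finrank_eq
    have h1 := Submodule.finrank_sup_add_finrank_inf_eq K R
    rw [hdisj, finrank_bot] at h1
    have h2 := LinearMap.finrank_range_add_finrank_ker (Matrix.toLin' C)
    have h3 : Module.finrank ℂ R = Module.finrank ℂ (LinearMap.range (Matrix.toLin' C)) := rfl
    have h4 : Module.finrank ℂ K = Module.finrank ℂ (LinearMap.ker (Matrix.toLin' C)) := rfl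
    omega
  intro v hv
  obtain ⟨u, hu⟩ := hv
  have hmem : v ∈ K ⊔ R := htop ▸ Submodule.mem_top
  obtain ⟨z, hz, w, hw, hzw⟩ := Submodule.mem_sup.mp hmem
  have hCz : C *ᵥ z = 0 := by
    simpa [Matrix.toLin'_apply] using (LinearMap.mem_ker.mp hz)
  have hAz : A *ᵥ z = 0 := aux_psd_add_kernel hA hB z hCz
  obtain ⟨y, hy⟩ := hw
  have hz0 : z = 0 := by
    apply dotProduct_star_self_eq_zero.mp
    have h1 : star z ⬝ᵥ v = 0 := by
      rw [← hu, Matrix.toLin'_apply, aux_herm_move hA.isHermitian, hAz]; simp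
    have h2 : star z ⬝ᵥ w = 0 := by
      rw [← hy, Matrix.toLin'_apply, aux_herm_move hC.isHermitian, hCz]; simp
    have hv' : v = z + w := hzw.symm
    calc star z ⬝ᵥ z = star z ⬝ᵥ v - star z ⬝ᵥ w := by
          rw [hv', dotProduct_add]; ring
      _ = 0 := by rw [h1, h2]; ring
  rw [← hzw, hz0, zero_add]; exact ⟨y, hy⟩

lemma aux_supp_le_supp_sum {ι : Type*} [DecidableEq ι] (F : Finset ι)
    (g : ι → Matrix (Fin d) (Fin d) ℂ) (hg : ∀ i ∈ F, (g i).PosSemidef)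
    {f : ι} (hf : f ∈ F) : supp (g f) ≤ supp (∑ i ∈ F, g i) := by
  rw [← Finset.add_sum_erase F g hf]
  exact aux_supp_le_supp_add (hg f hf)
    (aux_psd_sum _ _ fun i hi => hg i (Finset.mem_of_mem_erase hi))

lemma aux_psd_sqrt {σ : Matrix (Fin d) (Fin d) ℂ} (hσ : σ.PosSemidef) :
    ∃ S : Matrix (Fin d) (Fin d) ℂ, S.PosSemidef ∧ S * S = σ := by
  open scoped MatrixOrder in
  exact ⟨CFC.sqrt σ, (CFC.sqrt_nonneg σ).posSemidef, CFC.sqrt_mul_sqrt_self σ hσ.nonneg⟩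

lemma aux_psd_decomp {σ : Matrix (Fin d) (Fin d) ℂ} (hσ : σ.PosSemidef) :
    ∃ v : Fin d → (Fin d → ℂ), (∀ i, v i ∈ supp σ) ∧
      σ = ∑ i : Fin d, Matrix.vecMulVec (v i) (star (v i)) := by
  classical
  obtain ⟨S, hS, hSS⟩ := aux_psd_sqrt hσ
  have hle : supp σ ≤ supp S := by
    rw [supp, supp, ← hSS, Matrix.toLin'_mul]
    exact LinearMap.range_comp_le_range _ _
  have hker : LinearMap.ker (Matrix.toLin' σ) ≤ LinearMap.ker (Matrix.toLin' S) := by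
    intro x hx
    rw [LinearMap.mem_ker, Matrix.toLin'_apply] at hx ⊢
    have h0 : star (S *ᵥ x) ⬝ᵥ (S *ᵥ x) = 0 := by
      rw [← aux_herm_move hS.isHermitian, Matrix.mulVec_mulVec, hSS, hx]
      simp
    exact dotProduct_star_self_eq_zero.mp h0
  have heq : supp σ = supp S := by
    apply Submodule.eq_of_le_of_finrank_le hle
    have h1 := LinearMap.finrank_range_add_finrank_ker (Matrix.toLin' σ)
    have h2 := LinearMap.finrank_range_add_finrank_ker (Matrix.toLin' S)
    have h3 := Submodule.finrank_mono hker
    have h4 : Module.finrank ℂ (supp S) = Module.finrank ℂ (LinearMap.range (Matrix.toLin' S)) := rfl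
    have h5 : Module.finrank ℂ (supp σ) = Module.finrank ℂ (LinearMap.range (Matrix.toLin' σ)) := rfl
    omega
  refine ⟨fun i => S *ᵥ Pi.single i 1, fun i => ?_, ?_⟩
  · rw [heq]
    exact ⟨Pi.single i 1, Matrix.toLin'_apply _ _⟩
  · ext a b
    rw [← hSS, Matrix.mul_apply, Matrix.sum_apply]
    apply Finset.sum_congr rfl
    intro i _
    have ha : (S *ᵥ Pi.single i 1) = fun a => S a i := by
      ext a; simp [Matrix.mulVec_single]
    simp only [Matrix.vecMulVec_apply, Pi.star_apply, ha]
    rw [show star (S b i) = S i b from by rw [← Matrix.conjTranspose_apply, hS.isHermitian.eq]]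

lemma aux_cs (a b : Fin d → ℂ) :
    (Complex.normSq (star a ⬝ᵥ b) : ℂ) ≤ (star b ⬝ᵥ b) * (star a ⬝ᵥ a) := by
  set a' : EuclideanSpace ℂ (Fin d) := (WithLp.equiv 2 _).symm a with ha'
  set b' : EuclideanSpace ℂ (Fin d) := (WithLp.equiv 2 _).symm b with hb'
  have h1 : star a ⬝ᵥ b = (inner ℂ a' b' : ℂ) :=
    by rw [dotProduct_comm]; rfl
  have h2 : star a ⬝ᵥ a = ((‖a'‖ : ℂ))^2 := by
    rw [show star a ⬝ᵥ a = (inner ℂ a' a' : ℂ) from by rw [dotProduct_comm]; rfl,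
      inner_self_eq_norm_sq_to_K]
    rfl
  have h3 : star b ⬝ᵥ b = ((‖b'‖ : ℂ))^2 := by
    rw [show star b ⬝ᵥ b = (inner ℂ b' b' : ℂ) from by rw [dotProduct_comm]; rfl,
      inner_self_eq_norm_sq_to_K]
    rfl
  rw [h1, h2, h3]
  have hcs : ‖(inner ℂ a' b' : ℂ)‖ ≤ ‖a'‖ * ‖b'‖ := norm_inner_le_norm a' b'
  have hns : Complex.normSq (inner ℂ a' b' : ℂ) = ‖(inner ℂ a' b' : ℂ)‖^2 := by
    rw [Complex.sq_norm]
  rw [hns]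
  have : ((‖b'‖:ℂ))^2 * ((‖a'‖:ℂ))^2 = ((‖b'‖^2 * ‖a'‖^2 : ℝ) : ℂ) := by push_cast; ring
  rw [this]
  rw [Complex.real_le_real]
  nlinarith [norm_nonneg (inner ℂ a' b' : ℂ), norm_nonneg a', norm_nonneg b',
    mul_nonneg (norm_nonneg a') (norm_nonneg b')]

lemma aux_rankone {A : Matrix (Fin d) (Fin d) ℂ} (hA : A.PosSemidef) (u : Fin d → ℂ) :
    ((star u ⬝ᵥ A *ᵥ u) • A - Matrix.vecMulVec (A *ᵥ u) (star (A *ᵥ u))).PosSemidef := by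
  set v := A *ᵥ u with hvdef
  set c := star u ⬝ᵥ A *ᵥ u with hcdef
  have hc0 : 0 ≤ c := hA.dotProduct_mulVec_nonneg u
  have hcreal : star c = c := by
    rw [Complex.le_def] at hc0
    rw [Complex.star_def]
    exact Complex.conj_eq_iff_im.mpr (by simpa using hc0.2.symm)
  obtain ⟨S, hS, hSS⟩ := aux_psd_sqrt hA
  have hAv : ∀ y : Fin d → ℂ, A *ᵥ y = S *ᵥ (S *ᵥ y) := by
    intro y; rw [Matrix.mulVec_mulVec, hSS]
  refine Matrix.PosSemidef.of_dotProduct_mulVec_nonneg ?_ ?_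
  · have h1 : (c • A)ᴴ = c • A := by
      rw [Matrix.conjTranspose_smul, hA.isHermitian.eq, hcreal]
    have h2 : (Matrix.vecMulVec v (star v))ᴴ = Matrix.vecMulVec v (star v) := by
      ext i j
      simp [Matrix.conjTranspose_apply, Matrix.vecMulVec_apply, mul_comm]
    show (c • A - Matrix.vecMulVec v (star v))ᴴ = _
    rw [Matrix.conjTranspose_sub, h1, h2]
  · intro x
    have hvv : (Matrix.vecMulVec v (star v)) *ᵥ x = (star v ⬝ᵥ x) • v := by
      ext a
      simp only [Matrix.mulVec, Matrix.vecMulVec_apply, dotProduct, Pi.star_apply,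
        Pi.smul_apply, smul_eq_mul, Finset.sum_mul, Finset.mul_sum]
      apply Finset.sum_congr rfl
      intro j _; ring
    rw [Matrix.sub_mulVec, Matrix.smul_mulVec, hvv, dotProduct_sub,
      dotProduct_smul, dotProduct_smul]
    set q := star x ⬝ᵥ A *ᵥ x with hqdef
    set z := star x ⬝ᵥ v with hzdef
    have hz' : star v ⬝ᵥ x = star z := by
      rw [hzdef, star_dotProduct]
    rw [hz']
    have hzz : star z • z = (Complex.normSq z : ℂ) := by
      simp only [smul_eq_mul, Complex.star_def]
      rw [mul_comm, Complex.mul_conj]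
    rw [hzz]
    -- rewrite c, q, z in terms of S-vectors
    have hq' : q = star (S *ᵥ x) ⬝ᵥ (S *ᵥ x) := by
      rw [hqdef, hAv, aux_herm_move hS.isHermitian]
    have hc' : c = star (S *ᵥ u) ⬝ᵥ (S *ᵥ u) := by
      rw [hcdef, hAv, aux_herm_move hS.isHermitian]
    have hzeq : z = star (S *ᵥ x) ⬝ᵥ (S *ᵥ u) := by
      rw [hzdef, hvdef, hAv, aux_herm_move hS.isHermitian]
    have hcs := aux_cs (S *ᵥ x) (S *ᵥ u)
    rw [← hzeq, ← hq', ← hc'] at hcs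
    rw [smul_eq_mul]
    exact sub_nonneg.mpr hcs

end Aux4
section Aux5
open Filter Topology
variable (E : Fin m → Fin r → Matrix (Fin d) (Fin d) ℂ) (M0 M1 : Matrix (Fin d) (Fin d) ℂ)

lemma aux_Tword_zero (f : List (Fin m)) : Tword E M1 f (0 : Matrix (Fin d) (Fin d) ℂ) = 0 := by
  simpa using aux_Tword_smul E M1 f 0 0

lemma aux_Tstep_add (i : Fin m) (σ τ : Matrix (Fin d) (Fin d) ℂ) :
    Tstep E M1 i (σ + τ) = Tstep E M1 i σ + Tstep E M1 i τ := by
  simp [Tstep, Matrix.mul_add, Matrix.add_mul, Finset.sum_add_distrib]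

lemma aux_Tword_add (f : List (Fin m)) (σ τ : Matrix (Fin d) (Fin d) ℂ) :
    Tword E M1 f (σ + τ) = Tword E M1 f σ + Tword E M1 f τ := by
  induction f generalizing σ τ with
  | nil => rfl
  | cons k f ih => rw [aux_Tword_cons, aux_Tstep_add, ih]; rfl

lemma aux_Tword_finsum {ι : Type*} (F : Finset ι) (g : ι → Matrix (Fin d) (Fin d) ℂ)
    (f : List (Fin m)) :
    Tword E M1 f (∑ i ∈ F, g i) = ∑ i ∈ F, Tword E M1 f (g i) := by
  classical
  induction F using Finset.induction_on with
  | empty => simpa using aux_Tword_zero E M1 f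
  | insert a s hnot ih =>
    rw [Finset.sum_insert hnot, Finset.sum_insert hnot, aux_Tword_add, ih]

lemma aux_dominated {ρ σ : Matrix (Fin d) (Fin d) ℂ} (hρ : ρ.PosSemidef) (hσ : σ.PosSemidef)
    (hsupp : supp σ ≤ HR E M1 ρ) :
    ∃ (F : Finset (List (Fin m))) (c : ℂ), 0 ≤ c ∧
      ((c • ∑ f ∈ F, Tword E M1 f ρ) - σ).PosSemidef := by
  classical
  have hfg : (supp σ).FG := IsNoetherian.noetherian _
  have hcompact := (Submodule.fg_iff_compact _).mp hfg
  obtain ⟨F, hF⟩ := CompleteLattice.IsCompactElement.exists_finset_of_le_iSup (α := Submodule ℂ (Fin d → ℂ)) hcompact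
    (fun f => supp (Tword E M1 f ρ)) (by simpa [HR] using hsupp)
  set A := ∑ f ∈ F, Tword E M1 f ρ with hAdef
  have hA : A.PosSemidef := aux_psd_sum _ _ fun f _ => aux_Tword_psd E M1 f hρ
  have hsuppA : supp σ ≤ supp A := by
    refine le_trans hF ?_
    refine iSup_le fun f => iSup_le fun hf => ?_
    exact aux_supp_le_supp_sum F _ (fun i _ => aux_Tword_psd E M1 i hρ) hf
  obtain ⟨v, hv, hdecomp⟩ := aux_psd_decomp hσ
  have hu : ∀ i, ∃ u, A *ᵥ u = v i := by
    intro i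
    obtain ⟨u, hu⟩ := hsuppA (hv i)
    exact ⟨u, by rw [← Matrix.toLin'_apply]; exact hu⟩
  choose u hu using hu
  refine ⟨F, ∑ i : Fin d, star (u i) ⬝ᵥ A *ᵥ u i,
    Finset.sum_nonneg fun i _ => hA.dotProduct_mulVec_nonneg (u i), ?_⟩
  have hkey : (∑ i : Fin d, star (u i) ⬝ᵥ A *ᵥ u i) • A - σ
      = ∑ i : Fin d, ((star (u i) ⬝ᵥ A *ᵥ u i) • A
          - Matrix.vecMulVec (v i) (star (v i))) := by
    rw [hdecomp, Finset.sum_sub_distrib, Finset.sum_smul]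
  rw [← hAdef, hkey]
  apply aux_psd_sum
  intro i _
  have h := aux_rankone hA (u i)
  rw [hu i] at h
  rw [hu i]
  exact h

/-- The schedule that first runs the word `f` and then follows `s`. -/
def auxSched (f : List (Fin m)) (s : ℕ → Fin m) : ℕ → Fin m := fun n =>
  if h : n < f.length then f.get ⟨n, h⟩ else s (n - f.length)

lemma aux_prefix_glue (f : List (Fin m)) (s : ℕ → Fin m) (N : ℕ) :
    prefixn (auxSched f s) (f.length + N) = f ++ prefixn s N := by
  induction N with
  | zero =>
    rw [Nat.add_zero]
    have h1 : (fun i : Fin f.length => auxSched f s i) = f.get := by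
      funext i
      simp [auxSched, i.isLt]
    have h2 : prefixn s 0 = [] := rfl
    rw [prefixn, h1, List.ofFn_get, h2, List.append_nil]
  | succ N ih =>
    rw [← Nat.add_assoc, aux_prefixn_succ, ih, aux_prefixn_succ, List.append_assoc]
    have : auxSched f s (f.length + N) = s N := by
      simp [auxSched]
    rw [this]

lemma aux_big (hm : 0 < m)
    (hE : ∀ i, ∑ j, (E i j)ᴴ * E i j = 1) (hM : M0ᴴ * M0 + M1ᴴ * M1 = 1)
    {ρ : Matrix (Fin d) (Fin d) ℂ} (hρ : ρ.PosSemidef) (htr : ρ.trace = 1)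
    (ht : tInf E M0 M1 ρ = 1)
    {σ : Matrix (Fin d) (Fin d) ℂ} (hσ : σ.PosSemidef) (htrσ : σ.trace = 1)
    (hsupp : supp σ ≤ HR E M1 ρ) :
    tInf E M0 M1 σ = 1 := by
  have hre : ρ.trace.re = 1 := by rw [htr]; rfl
  have hreσ : σ.trace.re = 1 := by rw [htrσ]; rfl
  have hsched : ∀ g : ℕ → Fin m, tSched E M0 M1 g ρ = 1 := by
    intro g
    have h1 : tSched E M0 M1 g ρ ≤ 1 := by
      have h := aux_tSched_le E M0 M1 hE hM g hρ; rwa [hre] at h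
    have h2 : tInf E M0 M1 ρ ≤ tSched E M0 M1 g ρ := aux_tInf_le E M0 M1 g ρ hρ
    rw [ht] at h2; linarith
  have hg0 : ∀ g : ℕ → Fin m,
      Tendsto (fun N => (Tword E M1 (prefixn g N) ρ).trace.re) atTop (𝓝 0) := by
    intro g
    have h := aux_tendsto_g E M0 M1 hE hM g hρ
    rwa [hre, hsched g, sub_self] at h
  obtain ⟨F, c, hc0, hdom⟩ := aux_dominated E M1 hρ hσ hsupp
  have hcim : c.im = 0 := by
    rw [Complex.le_def] at hc0; simpa using hc0.2.symm
  have hσsched : ∀ s : ℕ → Fin m, tSched E M0 M1 s σ = 1 := by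
    intro s
    have htend : Tendsto (fun N => (Tword E M1 (prefixn s N) σ).trace.re) atTop (𝓝 0) := by
      set A := ∑ f ∈ F, Tword E M1 f ρ with hAdef
      have hbound : ∀ N, (Tword E M1 (prefixn s N) σ).trace.re
          ≤ c.re * ∑ f ∈ F, (Tword E M1 (f ++ prefixn s N) ρ).trace.re := by
        intro N
        have hmono : (Tword E M1 (prefixn s N) (c • A)
            - Tword E M1 (prefixn s N) σ).PosSemidef := by
          rw [← aux_Tword_sub]
          exact aux_Tword_psd E M1 _ hdom
        have h1 := aux_trace_re_mono hmono
        have h2 : Tword E M1 (prefixn s N) (c • A)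
            = c • ∑ f ∈ F, Tword E M1 (f ++ prefixn s N) ρ := by
          rw [aux_Tword_smul, hAdef, aux_Tword_finsum]
          congr 1
          exact Finset.sum_congr rfl fun f _ => (aux_Tword_append E M1 f _ ρ).symm
        rw [h2] at h1
        have h3 : ((c • ∑ f ∈ F, Tword E M1 (f ++ prefixn s N) ρ)).trace.re
            = c.re * ∑ f ∈ F, (Tword E M1 (f ++ prefixn s N) ρ).trace.re := by
          rw [Matrix.trace_smul, Matrix.trace_sum]
          rw [smul_eq_mul, Complex.mul_re, hcim]
          rw [Complex.re_sum]
          ring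
        rw [h3] at h1
        exact h1
      have hlim : Tendsto (fun N => c.re * ∑ f ∈ F,
          (Tword E M1 (f ++ prefixn s N) ρ).trace.re) atTop (𝓝 0) := by
        have hterm : ∀ f ∈ F, Tendsto
            (fun N => (Tword E M1 (f ++ prefixn s N) ρ).trace.re) atTop (𝓝 0) := by
          intro f _
          have hmain := (hg0 (auxSched f s)).comp (tendsto_add_atTop_nat f.length)
          refine hmain.congr fun N => ?_
          simp only [Function.comp_apply]
          rw [Nat.add_comm N f.length, aux_prefix_glue]
        have hsum := tendsto_finset_sum F hterm
        have := hsum.const_mul c.re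
        simpa using this
      apply squeeze_zero (fun N => aux_trace_re_nonneg (aux_Tword_psd E M1 _ hσ)) hbound hlim
    have h := aux_tendsto_g E M0 M1 hE hM s hσ
    rw [hreσ] at h
    have huniq := tendsto_nhds_unique h htend
    linarith
  have : Nonempty (ℕ → Fin m) := ⟨fun _ => ⟨0, hm⟩⟩
  rw [tInf]
  simp only [hσsched]
  exact ciInf_const

end Aux5
/-- `t(ρ) = 1` iff `h(ρ) = 1`. -/
theorem terminating_iff_reachable_termination_one (d m r : ℕ) (hd : 0 < d) (hm : 0 < m)
    (E : Fin m → Fin r → Matrix (Fin d) (Fin d) ℂ)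
    (hE : ∀ i, ∑ j, (E i j)ᴴ * E i j = 1)
    (M0 M1 : Matrix (Fin d) (Fin d) ℂ)
    (hM : M0ᴴ * M0 + M1ᴴ * M1 = 1)
    (ρ : Matrix (Fin d) (Fin d) ℂ) (hρ : ρ.PosSemidef) (htr : ρ.trace = 1) :
    tInf E M0 M1 ρ = 1 ↔ hProb E M0 M1 ρ = 1 := by
  have hre : ρ.trace.re = 1 := by rw [htr]; rfl
  have hρHR : supp ρ ≤ HR E M1 ρ :=
    le_iSup (fun f : List (Fin m) => supp (Tword E M1 f ρ)) ([] : List (Fin m))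
  set Sset := { x : ℝ | ∃ σ : Matrix (Fin d) (Fin d) ℂ,
    σ.PosSemidef ∧ σ.trace = 1 ∧ supp σ ≤ HR E M1 ρ ∧ x = tInf E M0 M1 σ } with hSset
  have hProbEq : hProb E M0 M1 ρ = sInf Sset := rfl
  constructor
  · intro ht
    have hall : ∀ x ∈ Sset, x = 1 := by
      rintro x ⟨σ, hσ, htrσ, hsupp, rfl⟩
      exact aux_big E M0 M1 hm hE hM hρ htr ht hσ htrσ hsupp
    have hmem : (1 : ℝ) ∈ Sset := ⟨ρ, hρ, htr, hρHR, ht.symm⟩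
    have hsingle : Sset = {1} := by
      apply Set.eq_singleton_iff_unique_mem.mpr
      exact ⟨hmem, hall⟩
    rw [hProbEq, hsingle, csInf_singleton]
  · intro hh
    have hb : BddBelow Sset := by
      refine ⟨0, ?_⟩
      rintro x ⟨σ, hσ, _, _, rfl⟩
      exact aux_tInf_nonneg E M0 M1 hm σ hσ
    have hmem : tInf E M0 M1 ρ ∈ Sset := ⟨ρ, hρ, htr, hρHR, rfl⟩
    have h1 : (1 : ℝ) ≤ tInf E M0 M1 ρ := by
      rw [hProbEq] at hh
      rw [← hh]
      exact csInf_le hb hmem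
    have h2 : tInf E M0 M1 ρ ≤ 1 := by
      have h3 := aux_tSched_le E M0 M1 hE hM (fun _ => ⟨0, hm⟩) hρ
      rw [hre] at h3
      exact le_trans (aux_tInf_le E M0 M1 _ ρ hρ) h3
    linarith
end
end

section
/- Let ε(ρ) = ∑_j F_j ρ F_j† be a super-operator on d×d complex matrices, given by finitely many Kraus matrices F_j with ∑_j F_j† F_j = I. Then for every positive semidefinite d×d matrix ρ, supp(ε(ρ)) = ⋁_j F_j(supp(ρ)), the join of the images of supp(ρ) under the linear maps F_j. (Equivalently, the image of the support equals the support of the image: ε(supp ρ) = supp ε(ρ).) -/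
noncomputable section
open Matrix
open scoped ComplexOrder

variable {d m r : ℕ}

/-- `range (A * Aᴴ) = range A`. -/
lemma range_mul_conjTranspose_aux {n : Type*} [Fintype n] [DecidableEq n]
    {d : ℕ} (A : Matrix (Fin d) n ℂ) :
    LinearMap.range (A * Aᴴ).mulVecLin = LinearMap.range A.mulVecLin := by
  have hle : LinearMap.range (A * Aᴴ).mulVecLin ≤ LinearMap.range A.mulVecLin := by
    rw [Matrix.mulVecLin_mul, LinearMap.range_comp]
    exact LinearMap.map_le_range
  refine Submodule.eq_of_le_of_finrank_le hle ?_
  have h1 : (A * Aᴴ).rank = A.rank := Matrix.rank_self_mul_conjTranspose A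
  simpa [Matrix.rank] using h1.ge

lemma toLin'_eq_mulVecLin {d : ℕ} (A : Matrix (Fin d) (Fin d) ℂ) :
    Matrix.toLin' A = A.mulVecLin := by
  ext x
  simp [Matrix.toLin'_apply, Matrix.mulVecLin_apply]

/-- the support of the image of a PSD matrix under a super-operator is the
join of the images of the support under the Kraus operators. -/
theorem supp_superoperator (d r : ℕ) (hd : 0 < d)
    (F : Fin r → Matrix (Fin d) (Fin d) ℂ)
    (hF : ∑ j, (F j)ᴴ * F j = 1)
    (ρ : Matrix (Fin d) (Fin d) ℂ) (hρ : ρ.PosSemidef) :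
    supp (∑ j, F j * ρ * (F j)ᴴ) =
      ⨆ j : Fin r, Submodule.map (Matrix.toLin' (F j)) (supp ρ) := by
  open scoped MatrixOrder in
  set s : Matrix (Fin d) (Fin d) ℂ := CFC.sqrt ρ with hs
  open scoped MatrixOrder in
  have hherm : sᴴ = s := (CFC.sqrt_nonneg ρ).posSemidef.isHermitian
  open scoped MatrixOrder in
  have hss : s * s = ρ := CFC.sqrt_mul_sqrt_self ρ hρ.nonneg
  -- supp ρ = range s
  have hsupp : supp ρ = LinearMap.range s.mulVecLin := by
    unfold supp
    rw [toLin'_eq_mulVecLin, ← hss]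
    have : s * s = s * sᴴ := by rw [hherm]
    rw [this, range_mul_conjTranspose_aux]
  -- each term
  have hterm : ∀ j, F j * ρ * (F j)ᴴ = (F j * s) * (F j * s)ᴴ := by
    intro j
    rw [Matrix.conjTranspose_mul, hherm, ← hss]
    noncomm_ring
  -- block matrix
  set C : Matrix (Fin d) (Fin r × Fin d) ℂ :=
    Matrix.of (fun i p => (F p.1 * s) i p.2) with hC
  have hCC : C * Cᴴ = ∑ j, F j * ρ * (F j)ᴴ := by
    rw [show (∑ j, F j * ρ * (F j)ᴴ) = ∑ j, (F j * s) * (F j * s)ᴴ from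
      Finset.sum_congr rfl fun j _ => hterm j]
    ext i k
    simp only [Matrix.mul_apply, Matrix.conjTranspose_apply, Matrix.sum_apply,
      Fintype.sum_prod_type, hC, Matrix.of_apply]
  have hrangeC : LinearMap.range C.mulVecLin =
      ⨆ j : Fin r, LinearMap.range (F j * s).mulVecLin := by
    rw [Matrix.range_mulVecLin, Matrix.col_eq_transpose]
    have hcols : Set.range Cᵀ = ⋃ j : Fin r, Set.range (F j * s)ᵀ := by
      ext v
      simp only [Set.mem_range, Set.mem_iUnion]
      constructor
      · rintro ⟨⟨j, k⟩, rfl⟩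
        exact ⟨j, k, rfl⟩
      · rintro ⟨j, k, rfl⟩
        exact ⟨(j, k), rfl⟩
    rw [show Set.range (Matrix.of.symm Cᵀ) = Set.range Cᵀ from rfl, hcols, Submodule.span_iUnion]
    refine iSup_congr fun j => ?_
    rw [Matrix.range_mulVecLin]
    rfl
  calc supp (∑ j, F j * ρ * (F j)ᴴ)
      = LinearMap.range (C * Cᴴ).mulVecLin := by
        unfold supp; rw [toLin'_eq_mulVecLin, hCC]
    _ = LinearMap.range C.mulVecLin := range_mul_conjTranspose_aux C
    _ = ⨆ j : Fin r, LinearMap.range (F j * s).mulVecLin := hrangeC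
    _ = ⨆ j : Fin r, Submodule.map (Matrix.toLin' (F j)) (supp ρ) := by
        refine iSup_congr fun j => ?_
        rw [hsupp, toLin'_eq_mulVecLin, Matrix.mulVecLin_mul, LinearMap.range_comp]
end
end

section
/- Let ε(ρ) = ∑_j F_j ρ F_j† be a super-operator on d×d complex matrices, given by finitely many Kraus matrices F_j with ∑_j F_j† F_j = I, and let X be a linear subspace of ℂ^d. Define the pre-image ε^{-1}(X) = {x ∈ ℂ^d : supp(ε(x x†)) ⊆ X}. Then ε^{-1}(X) = (⋁_j F_j†(X^⊥))^⊥, where ⊥ denotes the orthogonal complement with respect to the standard Hermitian inner product on ℂ^d and F_j†(X^⊥) is the image of X^⊥ under the conjugate-transpose matrix F_j†. -/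
noncomputable section
open Matrix

private lemma vecMulVec_mulVec' {n : Type*} [Fintype n] (a b z : n → ℂ) :
    vecMulVec a b *ᵥ z = (b ⬝ᵥ z) • a := by
  ext i
  simp only [vecMulVec_apply, mulVec, dotProduct, Pi.smul_apply, smul_eq_mul, Finset.sum_mul,
    Finset.mul_sum]
  exact Finset.sum_congr rfl fun k _ => by ring

private lemma conj_kraus {d : ℕ} (G : Matrix (Fin d) (Fin d) ℂ) (x : Fin d → ℂ) :
    G * vecMulVec x (star x) * Gᴴ = vecMulVec (G *ᵥ x) (star (G *ᵥ x)) := by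
  ext i k
  simp only [mul_apply, vecMulVec_apply, mulVec, dotProduct, conjTranspose_apply, Pi.star_apply,
    star_sum, star_mul', Finset.sum_mul, Finset.mul_sum]
  exact Finset.sum_congr rfl fun l _ => Finset.sum_congr rfl fun m _ => by ring

/-- the pre-image of a subspace under a super-operator is the orthogonal
complement of the join of the images of the orthogonal complement under the adjoint
Kraus operators: `ε⁻¹(X) = (⋁_j F_j†(X^⊥))^⊥`. -/
theorem preimage_superoperator (d r : ℕ) (hd : 0 < d)
    (F : Fin r → Matrix (Fin d) (Fin d) ℂ)
    (hF : ∑ j, (F j)ᴴ * F j = 1)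
    (X : Submodule ℂ (EuclideanSpace ℂ (Fin d))) :
    { x : EuclideanSpace ℂ (Fin d) |
        LinearMap.range (Matrix.toEuclideanLin
          (∑ j, F j * Matrix.vecMulVec x (star x) * (F j)ᴴ)) ≤ X } =
      ((⨆ j : Fin r, Submodule.map (Matrix.toEuclideanLin (F j)ᴴ) Xᗮ)ᗮ : Set (EuclideanSpace ℂ (Fin d))) := by
  have hXO : Xᗮᗮ = X := Submodule.orthogonal_orthogonal X
  ext x
  simp only [Set.mem_setOf_eq, SetLike.mem_coe]
  set u : Fin r → EuclideanSpace ℂ (Fin d) := fun j => Matrix.toEuclideanLin (F j) x with hu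
  have hM : ∀ z : EuclideanSpace ℂ (Fin d),
      Matrix.toEuclideanLin (∑ j, F j * Matrix.vecMulVec x (star x) * (F j)ᴴ) z
        = ∑ j, (inner ℂ (u j) z : ℂ) • u j := by
    intro z
    rw [map_sum, LinearMap.sum_apply]
    refine Finset.sum_congr rfl fun j _ => ?_
    apply WithLp.ofLp_injective 2
    show (F j * Matrix.vecMulVec x (star x) * (F j)ᴴ) *ᵥ z = _
    rw [conj_kraus, vecMulVec_mulVec', WithLp.ofLp_smul, EuclideanSpace.inner_eq_star_dotProduct,
      dotProduct_comm]
    rfl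
  have hkey : ∀ (j : Fin r) (y : EuclideanSpace ℂ (Fin d)),
      (inner ℂ (Matrix.toEuclideanLin (F j)ᴴ y) x : ℂ) = inner ℂ y (u j) := by
    intro j y
    rw [EuclideanSpace.inner_eq_star_dotProduct, EuclideanSpace.inner_eq_star_dotProduct,
      dotProduct_comm, dotProduct_comm (WithLp.ofLp (u j))]
    show star ((F j)ᴴ *ᵥ (y : Fin d → ℂ)) ⬝ᵥ (x : Fin d → ℂ)
        = star (y : Fin d → ℂ) ⬝ᵥ (F j *ᵥ (x : Fin d → ℂ))
    rw [star_mulVec, conjTranspose_conjTranspose, dotProduct_mulVec]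
  constructor
  · intro h
    rw [← Submodule.iInf_orthogonal, Submodule.mem_iInf]
    intro j
    rw [Submodule.mem_orthogonal]
    rintro v ⟨y, hy, rfl⟩
    rw [hkey j y]
    have h1 : Matrix.toEuclideanLin (∑ j, F j * Matrix.vecMulVec x (star x) * (F j)ᴴ) y ∈ X :=
      h ⟨y, rfl⟩
    have h2 : (inner ℂ y (Matrix.toEuclideanLin
        (∑ j, F j * Matrix.vecMulVec x (star x) * (F j)ᴴ) y) : ℂ) = 0 :=
      (Submodule.mem_orthogonal' X y).mp hy _ h1
    rw [hM, inner_sum] at h2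
    simp only [inner_smul_right] at h2
    have h2' : ∑ k, (Complex.normSq (inner ℂ (u k) y : ℂ) : ℂ) = 0 := by
      rw [← h2]
      refine Finset.sum_congr rfl fun k _ => ?_
      have hc : (inner ℂ y (u k) : ℂ) = starRingEnd ℂ (inner ℂ (u k) y : ℂ) :=
        (inner_conj_symm y (u k)).symm
      rw [hc, Complex.mul_conj]
    have h3 : ∑ k, Complex.normSq (inner ℂ (u k) y : ℂ) = 0 := by exact_mod_cast h2'
    have h5 : (inner ℂ (u j) y : ℂ) = 0 :=
      Complex.normSq_eq_zero.mp
        ((Finset.sum_eq_zero_iff_of_nonneg fun k _ => Complex.normSq_nonneg _).mp h3 j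
          (Finset.mem_univ j))
    rw [← inner_conj_symm y (u j), h5, map_zero]
  · intro h
    have hj : ∀ j, u j ∈ X := by
      intro j
      rw [← hXO, Submodule.mem_orthogonal]
      intro y hy
      rw [← hkey j y]
      rw [← Submodule.iInf_orthogonal, Submodule.mem_iInf] at h
      have := h j
      rw [Submodule.mem_orthogonal] at this
      exact this _ ⟨y, hy, rfl⟩
    rintro v ⟨z, rfl⟩
    rw [hM]
    exact Submodule.sum_mem X fun j _ => Submodule.smul_mem X _ (hj j)
end
end
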